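/- Let K be a real number with 0 < K < 1 and consider the polynomial q_K(z) = z(z+1)² - 4K. Then q_K has exactly one positive real root s, and s lies in the open interval (K, 1). -/
import Mathlib

theorem stmt_7 (K : ℝ) (hK0 : 0 < K) (hK1 : K < 1) :
    ∃ s : ℝ, (0 < s ∧ s * (s + 1) ^ 2 - 4 * K = 0 ∧ s ∈ Set.Ioo K 1) ∧
      ∀ t : ℝ, 0 < t → t * (t + 1) ^ 2 - 4 * K = 0 → t = s := by
  have hcont : ContinuousOn (fun x : ℝ => x * (x + 1) ^ 2 - 4 * K) (Set.Icc K 1) := by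
    fun_prop
  have hfK : K * (K + 1) ^ 2 - 4 * K < 0 := by nlinarith [mul_pos hK0 (sub_pos.mpr hK1), mul_pos (mul_pos hK0 (sub_pos.mpr hK1)) hK0]
  have hf1 : (0:ℝ) < 1 * (1 + 1) ^ 2 - 4 * K := by nlinarith
  have := intermediate_value_Ioo (le_of_lt hK1) hcont
  have hmem : (0:ℝ) ∈ Set.Ioo (K * (K + 1) ^ 2 - 4 * K) (1 * (1 + 1) ^ 2 - 4 * K) :=
    ⟨hfK, hf1⟩
  obtain ⟨s, hsIoo, hs0⟩ := this hmem
  simp only [] at hs0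
  refine ⟨s, ⟨hK0.trans hsIoo.1, hs0, hsIoo⟩, ?_⟩
  intro t ht hft
  by_contra hne
  rcases lt_or_gt_of_ne hne with h | h
  · have hs : 0 < s := hK0.trans hsIoo.1
    nlinarith [mul_pos (sub_pos.mpr h) (mul_pos hs ht), mul_pos hs ht, sq_nonneg (t + s)]
  · have hs : 0 < s := hK0.trans hsIoo.1
    nlinarith [mul_pos (sub_pos.mpr h) (mul_pos hs ht), mul_pos hs ht, sq_nonneg (t + s)]
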